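/- Let H be a bialgebra over a commutative ring R and π an n×n matrix with entries in H satisfying Δ(π_{ij}) = Σ_k π_{ik} ⊗ π_{kj} and ε(π_{ij}) = δ_{ij}, invertible as a matrix over H. On the free left H-module H^n define the left coaction Δ_L : H^n → (H ⊗ H)^n componentwise by (Δ_L v)_j = Δ(v_j), and the right coaction Δ_R : H^n → (H ⊗ H)^n by (Δ_R v)_j = Σ_i Δ(b_i) · (π_{ij} ⊗ 1), where b_i = Σ_k v_k (π⁻¹)_{ki} are the coefficients of v in the right-invariant basis ω^R_i = Σ_j π_{ij} e_j. Then the two coactions commute: (id_H ⊗ Δ_R) ∘ Δ_L = (Δ_L ⊗ id_H) ∘ Δ_R as linear maps H^n → (H ⊗ H ⊗ H)^n. -/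
import Mathlib


open TensorProduct

/-- The building block of the right coaction on one-forms: the linear map
`H →ₗ H ⊗ H` sending `x` to `Δ(x · π'_{ki}) · (π_{ij} ⊗ 1)`. -/
noncomputable def Amap (R H : Type*) [CommRing R] [Ring H] [Bialgebra R H] {n : ℕ}
    (π π' : Matrix (Fin n) (Fin n) H) (j i k : Fin n) : H →ₗ[R] H ⊗[R] H :=
  (LinearMap.mulRight R ((π i j) ⊗ₜ[R] (1 : H))) ∘ₗ
    Coalgebra.comul ∘ₗ (LinearMap.mulRight R (π' k i))

section Aux
variable (R H : Type*) [CommRing R] [Ring H] [Bialgebra R H] {n : ℕ}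

lemma comul_pi' (π π' : Matrix (Fin n) (Fin n) H)
    (hπ : ∀ a b, Coalgebra.comul (R := R) (π a b) = ∑ c, π a c ⊗ₜ[R] π c b)
    (hππ' : π * π' = 1) (hπ'π : π' * π = 1) :
    ∀ a b, Coalgebra.comul (R := R) (π' a b) = ∑ c, π' c b ⊗ₜ[R] π' a c := by
  classical
  set Δ := (Bialgebra.comulAlgHom R H).mapMatrix (m := Fin n) with hΔ
  set Q : Matrix (Fin n) (Fin n) (H ⊗[R] H) :=
    Matrix.of fun a b => ∑ c, π' c b ⊗ₜ[R] π' a c with hQ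
  have hQP : Q * Δ π = 1 := by
    ext a b
    simp only [Matrix.mul_apply, hQ, Matrix.of_apply, hΔ, AlgHom.mapMatrix_apply,
      Matrix.map_apply, Bialgebra.comulAlgHom_apply, hπ, Finset.sum_mul, Finset.mul_sum,
      Algebra.TensorProduct.tmul_mul_tmul]
    rw [Finset.sum_comm]
    have h1 : ∀ d : Fin n, ∑ m : Fin n, ∑ c : Fin n, (π' c m * π m d) ⊗ₜ[R] (π' a c * π d b)
        = (1:H) ⊗ₜ[R] (π' a d * π d b) := by
      intro d
      rw [Finset.sum_comm]
      have h2 : ∀ c, ∑ m, (π' c m * π m d) ⊗ₜ[R] (π' a c * π d b)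
          = (if c = d then (1:H) else 0) ⊗ₜ[R] (π' a c * π d b) := by
        intro c
        rw [← TensorProduct.sum_tmul, ← Matrix.mul_apply, hπ'π, Matrix.one_apply]
      simp only [h2, TensorProduct.ite_tmul]
      rw [Finset.sum_ite_eq' Finset.univ d fun c => (1:H) ⊗ₜ[R] (π' a c * π d b)]
      simp
    rw [Finset.sum_congr rfl fun d _ => h1 d]
    rw [← TensorProduct.tmul_sum, ← Matrix.mul_apply, hπ'π, Matrix.one_apply]
    split <;> simp [Matrix.one_apply, Algebra.TensorProduct.one_def, *]
  have hPQ' : Δ π * Δ π' = 1 := by rw [← map_mul, hππ', map_one]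
  have key : Q = Δ π' := by
    calc Q = Q * (Δ π * Δ π') := by rw [hPQ', mul_one]
    _ = (Q * Δ π) * Δ π' := by rw [mul_assoc]
    _ = Δ π' := by rw [hQP, one_mul]
  intro a b
  have : Q a b = Δ π' a b := by rw [key]
  simpa [hQ, hΔ] using this.symm


lemma sumA (π π' : Matrix (Fin n) (Fin n) H)
    (hπ : ∀ a b, Coalgebra.comul (R := R) (π a b) = ∑ c, π a c ⊗ₜ[R] π c b)
    (hππ' : π * π' = 1) (hπ'π : π' * π = 1) (j k : Fin n) (x : H) :
    ∑ i, Amap R H π π' j i k x =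
      Coalgebra.comul (R := R) x * ((1:H) ⊗ₜ[R] π' k j) := by
  classical
  have hπ'c := comul_pi' R H π π' hπ hππ' hπ'π
  simp only [Amap, LinearMap.comp_apply, LinearMap.mulRight_apply, Bialgebra.comul_mul, hπ'c]
  simp only [mul_assoc, ← Finset.mul_sum]
  congr 1
  simp only [Finset.sum_mul, Algebra.TensorProduct.tmul_mul_tmul, mul_one]
  rw [Finset.sum_comm]
  have h2 : ∀ c, ∑ i, (π' c i * π i j) ⊗ₜ[R] π' k c
      = (if c = j then (1:H) else 0) ⊗ₜ[R] π' k c := fun c => by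
    rw [← TensorProduct.sum_tmul, ← Matrix.mul_apply, hπ'π, Matrix.one_apply]
  simp only [h2, TensorProduct.ite_tmul]
  rw [Finset.sum_ite_eq' Finset.univ j fun c => (1:H) ⊗ₜ[R] π' k c]
  simp

lemma lTensor_mr (p : H) (y : H ⊗[R] H) :
    LinearMap.lTensor H (LinearMap.mulRight R ((1:H) ⊗ₜ[R] p) ∘ₗ
        (Coalgebra.comul (R := R))) y
      = LinearMap.lTensor H (Coalgebra.comul (R := R)) y *
          ((1:H) ⊗ₜ[R] ((1:H) ⊗ₜ[R] p)) := by
  induction y using TensorProduct.induction_on with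
  | zero => simp
  | tmul a b => simp [Algebra.TensorProduct.tmul_mul_tmul]
  | add u w hu hw => rw [map_add, map_add, hu, hw, add_mul]

lemma rTensor_mr (p : H) (w : H ⊗[R] H) :
    LinearMap.rTensor H (Coalgebra.comul (R := R) (A := H)) (w * ((1:H) ⊗ₜ[R] p))
      = LinearMap.rTensor H (Coalgebra.comul (R := R) (A := H)) w *
          (((1:H) ⊗ₜ[R] (1:H)) ⊗ₜ[R] p) := by
  induction w using TensorProduct.induction_on with
  | zero => simp
  | tmul a b => simp [Algebra.TensorProduct.tmul_mul_tmul, ← Algebra.TensorProduct.one_def]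
  | add u w hu hw => rw [add_mul, map_add, map_add, hu, hw, add_mul]

lemma assoc_symm_mr (p : H) (u : H ⊗[R] (H ⊗[R] H)) :
    (TensorProduct.assoc R H H H).symm (u * ((1:H) ⊗ₜ[R] ((1:H) ⊗ₜ[R] p)))
      = (TensorProduct.assoc R H H H).symm u * (((1:H) ⊗ₜ[R] (1:H)) ⊗ₜ[R] p) := by
  induction u using TensorProduct.induction_on with
  | zero => simp
  | tmul a w =>
    induction w using TensorProduct.induction_on with
    | zero => simp
    | tmul b c => simp [Algebra.TensorProduct.tmul_mul_tmul]
    | add u w hu hw =>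
      rw [TensorProduct.tmul_add, add_mul, map_add, map_add, hu, hw, add_mul]
  | add u w hu hw => rw [add_mul, map_add, map_add, hu, hw, add_mul]

end Aux

/-- The right coaction `Δ_R` on the one-forms `H^n`:
`(Δ_R v)_j = Σ_i Δ(b_i) · (π_{ij} ⊗ 1)` where `b_i = Σ_k v_k (π⁻¹)_{ki}`. -/
noncomputable def deltaR (R H : Type*) [CommRing R] [Ring H] [Bialgebra R H] {n : ℕ}
    (π π' : Matrix (Fin n) (Fin n) H) (v : Fin n → H) : Fin n → H ⊗[R] H :=
  fun j => ∑ i, ∑ k, Amap R H π π' j i k (v k)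

/-- bicovariance `(id ⊗ Δ_R) ∘ Δ_L = (Δ_L ⊗ id) ∘ Δ_R` of the one-forms
`H^n`, where `(Δ_L v)_j = Δ(v_j)` and `Δ_R` is as in `deltaR` (componentwise in
`(H ⊗ H ⊗ H)^n`, with the left leg(s) re-associated). -/
theorem bicovariance (R H : Type*) [CommRing R] [Ring H] [Bialgebra R H] {n : ℕ}
    (π π' : Matrix (Fin n) (Fin n) H)
    (hπ : ∀ a b, Coalgebra.comul (R := R) (π a b) = ∑ c, π a c ⊗ₜ[R] π c b)
    (hε : ∀ a b, Coalgebra.counit (R := R) (π a b) = if a = b then (1 : R) else 0)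
    (hππ' : π * π' = 1) (hπ'π : π' * π = 1) :
    ∀ (v : Fin n → H) (j : Fin n),
      (TensorProduct.assoc R H H H).symm
          (∑ i, ∑ k, (LinearMap.lTensor H (Amap R H π π' j i k))
            (Coalgebra.comul (R := R) (v k))) =
        (LinearMap.rTensor H (Coalgebra.comul (R := R) (A := H)))
          (deltaR R H π π' v j) := by
  classical
  intro v j
  unfold deltaR
  rw [Finset.sum_comm (γ := Fin n) (f := fun i k => (LinearMap.lTensor H (Amap R H π π' j i k))
    (Coalgebra.comul (R := R) (v k))),
    Finset.sum_comm (γ := Fin n) (f := fun i k => Amap R H π π' j i k (v k)),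
    map_sum, map_sum]
  refine Finset.sum_congr rfl fun k _ => ?_
  have hsum : ∑ i, (LinearMap.lTensor H (Amap R H π π' j i k))
      (Coalgebra.comul (R := R) (v k))
      = (LinearMap.lTensor H (LinearMap.mulRight R ((1:H) ⊗ₜ[R] π' k j) ∘ₗ
          (Coalgebra.comul (R := R)))) (Coalgebra.comul (R := R) (v k)) := by
    have hmaps : (∑ i, LinearMap.lTensor H (Amap R H π π' j i k))
        = LinearMap.lTensor H (LinearMap.mulRight R ((1:H) ⊗ₜ[R] π' k j) ∘ₗ
            (Coalgebra.comul (R := R))) := by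
      have h0 : (∑ i, Amap R H π π' j i k)
          = LinearMap.mulRight R ((1:H) ⊗ₜ[R] π' k j) ∘ₗ (Coalgebra.comul (R := R)) :=
        LinearMap.ext fun x => by simpa using sumA R H π π' hπ hππ' hπ'π j k x
      have h1 := map_sum (LinearMap.lTensorHom (R := R) (M := H) (N := H) (P := H ⊗[R] H))
        (fun i => Amap R H π π' j i k) Finset.univ
      rw [h0] at h1
      exact h1.symm
    rw [← LinearMap.sum_apply, hmaps]
  rw [hsum, lTensor_mr, assoc_symm_mr, Coalgebra.coassoc_symm_apply,
    sumA R H π π' hπ hππ' hπ'π j k (v k), rTensor_mr]
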